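/- Let n ≥ 4 and let 2 ≤ j ≤ i ≤ n − 2. Then in the cactus group J_n, the commutators [σ_i, σ_j] and [σ_{i+2}, σ_j] are congruent modulo Γ_3(J_n); that is, [σ_i, σ_j]·[σ_{i+2}, σ_j]⁻¹ ∈ Γ_3(J_n), where σ_i := σ_{1,i}. -/

import Mathlib

/-- Generators of the cactus group `J n`: pairs `(p, q)` with `1 ≤ p < q ≤ n`. -/
abbrev CactusGen (n : ℕ) := {pq : ℕ × ℕ // 1 ≤ pq.1 ∧ pq.1 < pq.2 ∧ pq.2 ≤ n}

/-- The defining relators of the standard presentation of the cactus group `J n`: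
`σ_{p,q}² = 1`; `σ_{p,q}σ_{r,s} = σ_{r,s}σ_{p,q}` when `[p,q] ∩ [r,s] = ∅`;
and `σ_{p,q}σ_{r,s} = σ_{p+q-s,p+q-r}σ_{p,q}` when `[r,s] ⊆ [p,q]`. -/
def cactusRels (n : ℕ) : Set (FreeGroup (CactusGen n)) :=
  { w | (∃ g : CactusGen n, w = FreeGroup.of g ^ 2) ∨
    (∃ g h : CactusGen n, (g.1.2 < h.1.1 ∨ h.1.2 < g.1.1) ∧
      w = FreeGroup.of g * FreeGroup.of h * (FreeGroup.of h * FreeGroup.of g)⁻¹) ∨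
    (∃ g h k : CactusGen n, g.1.1 ≤ h.1.1 ∧ h.1.2 ≤ g.1.2 ∧
      k.1.1 = g.1.1 + g.1.2 - h.1.2 ∧ k.1.2 = g.1.1 + g.1.2 - h.1.1 ∧
      w = FreeGroup.of g * FreeGroup.of h * (FreeGroup.of k * FreeGroup.of g)⁻¹) }

/-- The cactus group `J n`, as a presented group. -/
abbrev CactusGroup (n : ℕ) := PresentedGroup (cactusRels n)

/-- The generator `σ_{p,q}` of the cactus group `J n` (junk value `1` for invalid indices). -/
def cactusσ (n p q : ℕ) : CactusGroup n :=
  if h : 1 ≤ p ∧ p < q ∧ q ≤ n then PresentedGroup.of ⟨(p, q), h⟩ else 1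

open scoped commutatorElement

/- ### Auxiliary lemmas -/

lemma cactus_rel_eq_one {n : ℕ} {w : FreeGroup (CactusGen n)} (hw : w ∈ cactusRels n) :
    PresentedGroup.mk (cactusRels n) w = 1 := by
  have : w ∈ Subgroup.normalClosure (cactusRels n) := Subgroup.subset_normalClosure hw
  exact (QuotientGroup.eq_one_iff w).mpr this

lemma cactusσ_sq {n p q : ℕ} (h : 1 ≤ p ∧ p < q ∧ q ≤ n) :
    cactusσ n p q * cactusσ n p q = 1 := by
  have h1 : PresentedGroup.mk (cactusRels n)
      (FreeGroup.of (⟨(p, q), h⟩ : CactusGen n) ^ 2) = 1 :=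
    cactus_rel_eq_one (Or.inl ⟨⟨(p, q), h⟩, rfl⟩)
  rw [cactusσ, dif_pos h]
  simpa [pow_two, PresentedGroup.of] using h1

lemma cactusσ_nested {n p q r s : ℕ} (hp : 1 ≤ p) (hpr : p ≤ r) (hrs : r < s)
    (hsq : s ≤ q) (hqn : q ≤ n) :
    cactusσ n p q * cactusσ n r s = cactusσ n (p + q - s) (p + q - r) * cactusσ n p q := by
  have hg : 1 ≤ p ∧ p < q ∧ q ≤ n := ⟨hp, by omega, hqn⟩
  have hh : 1 ≤ r ∧ r < s ∧ s ≤ n := ⟨hp.trans hpr, hrs, hsq.trans hqn⟩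
  have hk : 1 ≤ p + q - s ∧ p + q - s < p + q - r ∧ p + q - r ≤ n := by omega
  have hrel : PresentedGroup.mk (cactusRels n)
      (FreeGroup.of (⟨(p, q), hg⟩ : CactusGen n) * FreeGroup.of (⟨(r, s), hh⟩ : CactusGen n) *
        (FreeGroup.of (⟨(p + q - s, p + q - r), hk⟩ : CactusGen n) *
          FreeGroup.of (⟨(p, q), hg⟩ : CactusGen n))⁻¹) = 1 := by
    refine cactus_rel_eq_one (Or.inr (Or.inr ⟨⟨(p, q), hg⟩, ⟨(r, s), hh⟩,
      ⟨(p + q - s, p + q - r), hk⟩, hpr, hsq, rfl, rfl, rfl⟩))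
  rw [cactusσ, dif_pos hg, cactusσ, dif_pos hh, cactusσ, dif_pos hk]
  simp only [map_mul, map_inv, mul_inv_eq_one] at hrel
  exact hrel

/-- Key group-theoretic identity: for involutions `a, c, d`,
`a * ((dcd) * (cac) * (dcd)) = ⁅a, ⁅d, c⁆⁆`, which lies in `Γ₃`. -/
lemma key_mem {G : Type*} [Group G] {a c d : G} (ha : a * a = 1) (hc : c * c = 1)
    (hd : d * d = 1) :
    a * (d * c * d * (c * a * c) * (d * c * d)) ∈ (⊤ : Subgroup G).lowerCentralSeries 2 := by
  have ia : a⁻¹ = a := inv_eq_of_mul_eq_one_right ha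
  have ic : c⁻¹ = c := inv_eq_of_mul_eq_one_right hc
  have idd : d⁻¹ = d := inv_eq_of_mul_eq_one_right hd
  have ha' : ∀ x : G, a * (a * x) = x := fun x => by rw [← mul_assoc, ha, one_mul]
  have hc' : ∀ x : G, c * (c * x) = x := fun x => by rw [← mul_assoc, hc, one_mul]
  have hd' : ∀ x : G, d * (d * x) = x := fun x => by rw [← mul_assoc, hd, one_mul]
  have h1 : a * (d * c * d * (c * a * c) * (d * c * d)) = ⁅a, ⁅d, c⁆⁆ := by
    simp [commutatorElement_def, ia, ic, idd, mul_assoc, ha', hc', hd']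
  rw [h1, ← commutatorElement_inv]
  refine Subgroup.inv_mem _ ?_
  show ⁅⁅d, c⁆, a⁆ ∈ ⁅(⊤ : Subgroup G).lowerCentralSeries 1, (⊤ : Subgroup G)⁆
  refine Subgroup.commutator_mem_commutator ?_ (Subgroup.mem_top a)
  show ⁅d, c⁆ ∈ ⁅(⊤ : Subgroup G), (⊤ : Subgroup G)⁆
  exact Subgroup.commutator_mem_commutator (Subgroup.mem_top d) (Subgroup.mem_top c)

/-- For `n ≥ 4` and `2 ≤ j ≤ i ≤ n - 2`, the commutators `[σ_{1,i}, σ_{1,j}]` and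
`[σ_{1,i+2}, σ_{1,j}]` are congruent modulo `Γ₃(J_n) = lowerCentralSeries (CactusGroup n) 2`. -/
theorem cactus_commutator_shift_by_two (n i j : ℕ) (hn : 4 ≤ n)
    (hj : 2 ≤ j) (hji : j ≤ i) (hi : i ≤ n - 2) :
    ⁅cactusσ n 1 i, cactusσ n 1 j⁆ * (⁅cactusσ n 1 (i + 2), cactusσ n 1 j⁆)⁻¹ ∈
      (⊤ : Subgroup (CactusGroup n)).lowerCentralSeries 2 := by
  have hin : i + 2 ≤ n := by omega
  -- abbreviations
  set sI := cactusσ n 1 i with hsI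
  set sJ := cactusσ n 1 j with hsJ
  set sI2 := cactusσ n 1 (i + 2) with hsI2
  set a := cactusσ n (i + 1 - j) i with hA
  set c := cactusσ n (i + 1 - j) (i + 1) with hC
  set d := cactusσ n (i + 1 - j) (i + 2) with hD
  set a' := cactusσ n (i + 2 - j) (i + 1) with hA'
  set c₂ := cactusσ n (i + 2 - j) (i + 2) with hC2
  set b := cactusσ n (i + 3 - j) (i + 2) with hB
  -- involutions
  have hsqI : sI * sI = 1 := cactusσ_sq ⟨le_refl 1, by omega, by omega⟩
  have hsqJ : sJ * sJ = 1 := cactusσ_sq ⟨le_refl 1, by omega, by omega⟩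
  have hsqI2 : sI2 * sI2 = 1 := cactusσ_sq ⟨le_refl 1, by omega, by omega⟩
  have hsqa : a * a = 1 := cactusσ_sq ⟨by omega, by omega, by omega⟩
  have hsqc : c * c = 1 := cactusσ_sq ⟨by omega, by omega, by omega⟩
  have hsqd : d * d = 1 := cactusσ_sq ⟨by omega, by omega, by omega⟩
  have hsqc2 : c₂ * c₂ = 1 := cactusσ_sq ⟨by omega, by omega, by omega⟩
  have hsqb : b * b = 1 := cactusσ_sq ⟨by omega, by omega, by omega⟩
  -- relations
  have F1 : sI * sJ = a * sI := by
    have := cactusσ_nested (n := n) (p := 1) (q := i) (r := 1) (s := j)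
      le_rfl le_rfl (by omega) hji (by omega)
    have e1 : 1 + i - j = i + 1 - j := by omega
    have e2 : 1 + i - 1 = i := by omega
    rwa [e1, e2] at this
  have F2 : sI2 * sJ = b * sI2 := by
    have := cactusσ_nested (n := n) (p := 1) (q := i + 2) (r := 1) (s := j)
      le_rfl le_rfl (by omega) (by omega) hin
    have e1 : 1 + (i + 2) - j = i + 3 - j := by omega
    have e2 : 1 + (i + 2) - 1 = i + 2 := by omega
    rwa [e1, e2] at this
  have F3 : c * a = a' * c := by
    have := cactusσ_nested (n := n) (p := i + 1 - j) (q := i + 1) (r := i + 1 - j) (s := i)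
      (by omega) le_rfl (by omega) (by omega) (by omega)
    have e1 : i + 1 - j + (i + 1) - i = i + 2 - j := by omega
    have e2 : i + 1 - j + (i + 1) - (i + 1 - j) = i + 1 := by omega
    rwa [e1, e2] at this
  have F4 : d * c = c₂ * d := by
    have := cactusσ_nested (n := n) (p := i + 1 - j) (q := i + 2) (r := i + 1 - j) (s := i + 1)
      (by omega) le_rfl (by omega) (by omega) hin
    have e1 : i + 1 - j + (i + 2) - (i + 1) = i + 2 - j := by omega
    have e2 : i + 1 - j + (i + 2) - (i + 1 - j) = i + 2 := by omega
    rwa [e1, e2] at this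
  have F5 : c₂ * a' = b * c₂ := by
    have := cactusσ_nested (n := n) (p := i + 2 - j) (q := i + 2) (r := i + 2 - j) (s := i + 1)
      (by omega) le_rfl (by omega) (by omega) hin
    have e1 : i + 2 - j + (i + 2) - (i + 1) = i + 3 - j := by omega
    have e2 : i + 2 - j + (i + 2) - (i + 2 - j) = i + 2 := by omega
    rwa [e1, e2] at this
  -- inverses
  have iI : sI⁻¹ = sI := inv_eq_of_mul_eq_one_right hsqI
  have iJ : sJ⁻¹ = sJ := inv_eq_of_mul_eq_one_right hsqJ
  have iI2 : sI2⁻¹ = sI2 := inv_eq_of_mul_eq_one_right hsqI2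
  have ic : c⁻¹ = c := inv_eq_of_mul_eq_one_right hsqc
  have idd : d⁻¹ = d := inv_eq_of_mul_eq_one_right hsqd
  have ic2 : c₂⁻¹ = c₂ := inv_eq_of_mul_eq_one_right hsqc2
  have ib : b⁻¹ = b := inv_eq_of_mul_eq_one_right hsqb
  -- expressing a', c₂ and b
  have ea' : a' = c * a * c := by
    rw [F3, mul_assoc, hsqc, mul_one]
  have ec2 : c₂ = d * c * d := by
    rw [F4, mul_assoc, hsqd, mul_one]
  have eb : b = c₂ * a' * c₂ := by
    rw [F5, mul_assoc, hsqc2, mul_one]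
  -- the two commutators
  have hcomm1 : ⁅sI, sJ⁆ = a * sJ := by
    rw [commutatorElement_def, iI, iJ, F1, mul_assoc a sI sI, hsqI, mul_one]
  have hcomm2 : ⁅sI2, sJ⁆ = b * sJ := by
    rw [commutatorElement_def, iI2, iJ, F2, mul_assoc b sI2 sI2, hsqI2, mul_one]
  rw [hcomm1, hcomm2, mul_inv_rev, iJ, ib, ← mul_assoc, mul_assoc a sJ sJ, hsqJ, mul_one]
  rw [eb, ea', ec2]
  exact key_mem hsqa hsqc hsqd
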